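/- Let σ be a sequence of length n with values in ℕ. Suppose for index j there exists k < j and an element a of the multiset {σ(i) : i ∈ [k, j)} whose rank in that multiset is at most (j-k)/2, such that σ(j) < a. Then |{i ∈ [k, j) : σ(i) > σ(j)}| > (j-k)/2, i.e., more than half the items in [k, j) are inversions with j. -/

import Mathlib

/-- Rank of `a` in a multiset: its 1-indexed position in sorted non-decreasing
order (smallest possible position among equal elements). -/
def rankLow {α : Type*} [LinearOrder α] (Q : Multiset α) (a : α) : ℕ :=
  (Q.filter (fun b => b < a)).card + 1

theorem small_rank_implies_many_inversions {n : ℕ} (σ : Fin n → ℕ) (j k : Fin n)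
    (hkj : k < j) (a : ℕ) (ha : a ∈ (Finset.Ico k j).val.map σ)
    (hrank : 2 * rankLow ((Finset.Ico k j).val.map σ) a ≤ (j : ℕ) - (k : ℕ))
    (hja : σ j < a) :
    (j : ℕ) - (k : ℕ) < 2 * ((Finset.Ico k j).filter (fun i => σ j < σ i)).card := by
  classical
  set I := Finset.Ico k j with hI
  have hm : I.card = (j : ℕ) - (k : ℕ) := by
    simp [hI]
  -- card of multiset filter equals card of finset filter
  have hc : ((I.val.map σ).filter (fun b => b < a)).card
      = (I.filter (fun i => σ i < a)).card := by
    rw [Multiset.filter_map, Multiset.card_map]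
    rfl
  set c := (I.filter (fun i => σ i < a)).card with hcdef
  have hrank' : 2 * (c + 1) ≤ (j : ℕ) - (k : ℕ) := by
    simpa [rankLow, hc] using hrank
  have hsplit : (I.filter (fun i => σ i < a)).card
      + (I.filter (fun i => ¬ σ i < a)).card = I.card :=
    Finset.card_filter_add_card_filter_not _
  have hsub : (I.filter (fun i => ¬ σ i < a)).card
      ≤ (I.filter (fun i => σ j < σ i)).card := by
    apply Finset.card_le_card
    intro i hi
    simp only [Finset.mem_filter, not_lt] at hi ⊢
    exact ⟨hi.1, lt_of_lt_of_le hja hi.2⟩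
  have h1 : (I.filter (fun i => ¬ σ i < a)).card = ((j : ℕ) - (k : ℕ)) - c := by
    omega
  omega
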